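/- arXiv:math-ph/0301004 — 5 statements merged into one kernel-verified Lean document; each statement's English description precedes it below -/
import Mathlib

section
/- The four-dimensional Lie algebra A₄,₁₂ with basis X₁,...,X₄ and brackets [X₁,X₃]=X₁, [X₂,X₃]=X₂, [X₁,X₄]=-X₂, [X₂,X₄]=X₁ is exact symplectic: the linear form α dual to X₁ (α(X₁)=1, α(Xᵢ)=0 otherwise) gives a nondegenerate form ω(X,Y)=α([X,Y]). -/
/-- The Lie algebra `A₄,₁₂` with brackets `⁅X₁,X₃⁆=X₁`, `⁅X₂,X₃⁆=X₂`,
`⁅X₁,X₄⁆=-X₂`, `⁅X₂,X₄⁆=X₁` (other basis brackets zero) is exact symplectic: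
the form `(X,Y) ↦ α ⁅X,Y⁆` with `α` the dual of `X₁` is nondegenerate. -/
theorem stmt_7 (L : Type*) [LieRing L] [LieAlgebra ℝ L]
    (B : Module.Basis (Fin 4) ℝ L)
    (h13 : ⁅B 0, B 2⁆ = B 0) (h23 : ⁅B 1, B 2⁆ = B 1)
    (h14 : ⁅B 0, B 3⁆ = -B 1) (h24 : ⁅B 1, B 3⁆ = B 0)
    (h12 : ⁅B 0, B 1⁆ = 0) (h34 : ⁅B 2, B 3⁆ = 0)
    (α : L →ₗ[ℝ] ℝ) (hα : ∀ i : Fin 4, α (B i) = if i = 0 then 1 else 0) :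
    ∀ X : L, X ≠ 0 → ∃ Y : L, α ⁅X, Y⁆ ≠ 0 := by
  intro X hX
  set a : Fin 4 → ℝ := fun i => B.repr X i with ha
  have hXr : X = a 0 • B 0 + a 1 • B 1 + a 2 • B 2 + a 3 • B 3 := by
    have := B.sum_repr X
    rw [Fin.sum_univ_four] at this
    exact this.symm
  -- derived brackets
  have h21 : ⁅B 1, B 0⁆ = 0 := by rw [← lie_skew, h12, neg_zero]
  have h31 : ⁅B 2, B 0⁆ = -B 0 := by rw [← lie_skew, h13]
  have h32 : ⁅B 2, B 1⁆ = -B 1 := by rw [← lie_skew, h23]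
  have h41 : ⁅B 3, B 0⁆ = B 1 := by rw [← lie_skew, h14, neg_neg]
  have h42 : ⁅B 3, B 1⁆ = -B 0 := by rw [← lie_skew, h24]
  have h43 : ⁅B 3, B 2⁆ = 0 := by rw [← lie_skew, h34, neg_zero]
  have key : ∀ j : Fin 4, α ⁅X, B j⁆ =
      a 0 * α ⁅B 0, B j⁆ + a 1 * α ⁅B 1, B j⁆ + a 2 * α ⁅B 2, B j⁆ + a 3 * α ⁅B 3, B j⁆ := by
    intro j
    rw [hXr]
    simp [add_lie, smul_lie]
  have hnz : ∃ i : Fin 4, a i ≠ 0 := by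
    by_contra h
    push_neg at h
    apply hX
    rw [hXr, h 0, h 1, h 2, h 3]
    simp
  obtain ⟨i, hi⟩ := hnz
  fin_cases i
  · exact ⟨B 2, by rw [key 2]; simp [h13, h23, lie_self, h43, hα]; exact hi⟩
  · exact ⟨B 3, by rw [key 3]; simp [h14, h24, h34, lie_self, hα]; exact hi⟩
  · exact ⟨B 0, by rw [key 0]; simp [h21, h31, h41, lie_self, hα]; simpa using hi⟩
  · exact ⟨B 1, by rw [key 1]; simp [h12, h32, h42, lie_self, hα]; simpa using hi⟩
end

section
/- For the four-dimensional Lie algebra A₄,₂¹ with brackets [X₁,X₄]=X₁, [X₂,X₄]=X₂, [X₃,X₄]=X₂+X₃, every linear form α ∈ g* yields a degenerate 2-form ω(X,Y) = α([X,Y]); hence A₄,₂¹ is not exact symplectic. -/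
/-- For the Lie algebra `A₄,₂¹` with brackets `⁅X₁,X₄⁆=X₁`, `⁅X₂,X₄⁆=X₂`,
`⁅X₃,X₄⁆=X₂+X₃` (other basis brackets zero), every linear form `α` yields a
degenerate form `(X,Y) ↦ α ⁅X,Y⁆`; hence `A₄,₂¹` is not exact symplectic. -/
theorem stmt_8 (L : Type*) [LieRing L] [LieAlgebra ℝ L]
    (B : Module.Basis (Fin 4) ℝ L)
    (h14 : ⁅B 0, B 3⁆ = B 0) (h24 : ⁅B 1, B 3⁆ = B 1)
    (h34 : ⁅B 2, B 3⁆ = B 1 + B 2)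
    (h12 : ⁅B 0, B 1⁆ = 0) (h13 : ⁅B 0, B 2⁆ = 0) (h23 : ⁅B 1, B 2⁆ = 0) :
    ∀ α : L →ₗ[ℝ] ℝ, ∃ X : L, X ≠ 0 ∧ ∀ Y : L, α ⁅X, Y⁆ = 0 := by
  intro α
  have key : ∀ X : L, (∀ i, α ⁅X, B i⁆ = 0) → ∀ Y, α ⁅X, Y⁆ = 0 := by
    intro X h Y
    have h0 : (α ∘ₗ (LieAlgebra.ad ℝ L X)) = 0 := B.ext (fun i => h i)
    have := LinearMap.ext_iff.mp h0 Y
    simpa using this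
  by_cases hα : α (B 0) = 0
  · refine ⟨B 0, B.ne_zero 0, key _ ?_⟩
    intro i
    fin_cases i <;> simp [h12, h13, h14, hα]
  · refine ⟨α (B 1) • B 0 - α (B 0) • B 1, ?_, key _ ?_⟩
    · intro h
      have := congrArg (fun z => B.repr z 1) h
      simp [Finsupp.single_apply, hα] at this
    · have h21 : ⁅B 1, B 0⁆ = 0 := by rw [← lie_skew, h12, neg_zero]
      intro i
      fin_cases i
      · simp [sub_lie, smul_lie, h12, h21]
      · simp [sub_lie, smul_lie, h12, h21]
      · simp [sub_lie, smul_lie, h13, h23]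
      · simp [sub_lie, smul_lie, h14, h24]; ring
end

section
/- For the Lie algebra A₄,₉^b (with parameter b ∈ ℝ, -1 ≤ b ≤ 1, b ≠ -1) given by [X₂,X₃]=X₁, [X₁,X₄]=(1+b)X₁, [X₂,X₄]=X₂, [X₃,X₄]=bX₃, the form ω(X,Y)=α([X,Y]) with α the dual of X₁ is nondegenerate; hence A₄,₉^b is exact symplectic. -/
/-- For the Lie algebra `A₄,₉ᵇ` (`-1 ≤ b ≤ 1`, `b ≠ -1`) with brackets
`⁅X₂,X₃⁆=X₁`, `⁅X₁,X₄⁆=(1+b)X₁`, `⁅X₂,X₄⁆=X₂`, `⁅X₃,X₄⁆=bX₃` (other basis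
brackets zero), the form `(X,Y) ↦ α ⁅X,Y⁆` with `α` the dual of `X₁` is
nondegenerate; hence `A₄,₉ᵇ` is exact symplectic. -/
theorem stmt_10 (b : ℝ) (hb₁ : -1 ≤ b) (hb₂ : b ≤ 1) (hb : b ≠ -1)
    (L : Type*) [LieRing L] [LieAlgebra ℝ L]
    (B : Module.Basis (Fin 4) ℝ L)
    (h23 : ⁅B 1, B 2⁆ = B 0) (h14 : ⁅B 0, B 3⁆ = (1 + b) • B 0)
    (h24 : ⁅B 1, B 3⁆ = B 1) (h34 : ⁅B 2, B 3⁆ = b • B 2)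
    (h12 : ⁅B 0, B 1⁆ = 0) (h13 : ⁅B 0, B 2⁆ = 0)
    (α : L →ₗ[ℝ] ℝ) (hα : ∀ i : Fin 4, α (B i) = if i = 0 then 1 else 0) :
    ∀ X : L, X ≠ 0 → ∃ Y : L, α ⁅X, Y⁆ ≠ 0 := by
  intro X hX
  have hb' : 1 + b ≠ 0 := fun h => hb (by linarith)
  set c : Fin 4 → ℝ := fun i => B.repr X i with hc
  have hXr : X = c 0 • B 0 + c 1 • B 1 + c 2 • B 2 + c 3 • B 3 := by
    have := B.sum_repr X
    rw [Fin.sum_univ_four] at this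
    exact this.symm
  have h21 : ⁅B 2, B 1⁆ = -B 0 := by rw [← lie_skew, h23]
  have h31 : ⁅B 3, B 1⁆ = -B 1 := by rw [← lie_skew, h24]
  have h32 : ⁅B 3, B 2⁆ = -(b • B 2) := by rw [← lie_skew, h34]
  have h41 : ⁅B 3, B 0⁆ = -((1 + b) • B 0) := by rw [← lie_skew, h14]
  have h21' : ⁅B 1, B 0⁆ = 0 := by rw [← lie_skew, h12]; simp
  have h31' : ⁅B 2, B 0⁆ = 0 := by rw [← lie_skew, h13]; simp
  have hα0 : α (B 0) = 1 := by simpa using hα 0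
  have hα1 : α (B 1) = 0 := by simpa using hα 1
  have hα2 : α (B 2) = 0 := by simpa using hα 2
  have hα3 : α (B 3) = 0 := by simpa using hα 3
  by_cases h3 : c 3 ≠ 0
  · refine ⟨B 0, ?_⟩
    rw [hXr]
    simp only [add_lie, smul_lie, lie_self, h21', h31', h41, map_add, map_smul, map_neg,
      map_zero, hα0, hα1, hα2, hα3, smul_eq_mul]
    intro h
    apply h3
    have : c 3 * -(1 + b) = 0 := by linarith [h]
    rcases mul_eq_zero.mp this with h' | h'
    · exact h'
    · exact absurd (by linarith : (1:ℝ) + b = 0) hb'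
  push_neg at h3
  by_cases h2 : c 2 ≠ 0
  · refine ⟨B 1, ?_⟩
    rw [hXr]
    simp only [add_lie, smul_lie, lie_self, h12, h21, h31, map_add, map_smul, map_neg,
      map_zero, hα0, hα1, hα2, hα3, smul_eq_mul]
    intro h; apply h2; linarith
  push_neg at h2
  by_cases h1 : c 1 ≠ 0
  · refine ⟨B 2, ?_⟩
    rw [hXr]
    simp only [add_lie, smul_lie, lie_self, h13, h23, h32, map_add, map_smul, map_neg,
      map_zero, hα0, hα1, hα2, hα3, smul_eq_mul]
    intro h; apply h1; linarith
  push_neg at h1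
  by_cases h0 : c 0 ≠ 0
  · refine ⟨B 3, ?_⟩
    rw [hXr]
    simp only [add_lie, smul_lie, lie_self, h14, h24, h34, map_add, map_smul,
      map_zero, hα0, hα1, hα2, hα3, smul_eq_mul]
    intro h
    apply h0
    have : c 0 * (1 + b) = 0 := by linarith
    rcases mul_eq_zero.mp this with h' | h'
    · exact h'
    · exact absurd h' hb'
  push_neg at h0
  exact absurd (by rw [hXr, h0, h1, h2, h3]; simp) hX
end

section
/- For the Lie algebra A₄,₁₁^a (a > 0) with brackets [X₂,X₃]=X₁, [X₁,X₄]=2aX₁, [X₂,X₄]=aX₂-X₃, [X₃,X₄]=X₂+aX₃, the form ω(X,Y)=α([X,Y]) with α(X₁)=1, α(X₂)=α(X₃)=α(X₄)=0 is nondegenerate. -/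
/-- For the Lie algebra `A₄,₁₁ᵃ` (`a > 0`) with brackets `⁅X₂,X₃⁆=X₁`,
`⁅X₁,X₄⁆=2aX₁`, `⁅X₂,X₄⁆=aX₂-X₃`, `⁅X₃,X₄⁆=X₂+aX₃` (other basis brackets
zero), the form `(X,Y) ↦ α ⁅X,Y⁆` with `α(X₁)=1`, `α(X₂)=α(X₃)=α(X₄)=0` is
nondegenerate. -/
theorem stmt_11 (a : ℝ) (ha : 0 < a)
    (L : Type*) [LieRing L] [LieAlgebra ℝ L]
    (B : Module.Basis (Fin 4) ℝ L)
    (h23 : ⁅B 1, B 2⁆ = B 0) (h14 : ⁅B 0, B 3⁆ = (2 * a) • B 0)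
    (h24 : ⁅B 1, B 3⁆ = a • B 1 - B 2) (h34 : ⁅B 2, B 3⁆ = B 1 + a • B 2)
    (h12 : ⁅B 0, B 1⁆ = 0) (h13 : ⁅B 0, B 2⁆ = 0)
    (α : L →ₗ[ℝ] ℝ) (hα : ∀ i : Fin 4, α (B i) = if i = 0 then 1 else 0) :
    ∀ X : L, X ≠ 0 → ∃ Y : L, α ⁅X, Y⁆ ≠ 0 := by
  intro X hX
  set c := B.repr X with hc
  have hrep : (∑ i, c i • B i) = X := B.sum_repr X
  have hne : ∃ i, c i ≠ 0 := by
    by_contra h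
    push_neg at h
    apply hX
    rw [← hrep]
    simp [h]
  obtain ⟨i, hi⟩ := hne
  have hα0 : α (B 0) = 1 := by simpa using hα 0
  have hα1 : α (B 1) = 0 := by simpa using hα 1
  have hα2 : α (B 2) = 0 := by simpa using hα 2
  have hα3 : α (B 3) = 0 := by simpa using hα 3
  have h21 : ⁅B 2, B 1⁆ = -B 0 := by rw [← lie_skew, h23]
  have h10 : ⁅B 1, B 0⁆ = 0 := by rw [← lie_skew, h12, neg_zero]
  have h20 : ⁅B 2, B 0⁆ = 0 := by rw [← lie_skew, h13, neg_zero]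
  have h30 : ⁅B 3, B 0⁆ = -((2 * a) • B 0) := by rw [← lie_skew, h14]
  have h31 : ⁅B 3, B 1⁆ = -(a • B 1 - B 2) := by rw [← lie_skew, h24]
  have h32 : ⁅B 3, B 2⁆ = -(B 1 + a • B 2) := by rw [← lie_skew, h34]
  have key : ∀ j, α ⁅X, B j⁆ = ∑ i, c i * α ⁅B i, B j⁆ := by
    intro j
    let f : L →ₗ[ℝ] ℝ :=
      { toFun := fun Z => α ⁅Z, B j⁆
        map_add' := fun x y => by simp [add_lie]
        map_smul' := fun r x => by simp [smul_lie] }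
    have hf : α ⁅X, B j⁆ = f X := rfl
    rw [hf, ← hrep, map_sum]
    simp [f, smul_eq_mul]
  have ha' : (2 : ℝ) * a ≠ 0 := by positivity
  fin_cases i
  · exact ⟨B 3, by
      rw [key 3, Fin.sum_univ_four]
      simp only [h14, h24, h34, lie_self, map_smul, map_add, map_sub, map_zero,
        hα0, hα1, hα2, hα3]
      simpa using mul_ne_zero hi ha'⟩
  · exact ⟨B 2, by
      rw [key 2, Fin.sum_univ_four]
      simp only [h23, h13, h32, lie_self, map_neg, map_smul, map_add, map_zero,
        hα0, hα1, hα2, hα3]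
      simpa using hi⟩
  · exact ⟨B 1, by
      rw [key 1, Fin.sum_univ_four]
      simp only [h12, h21, h31, lie_self, map_neg, map_smul, map_sub, map_zero,
        hα0, hα1, hα2, hα3]
      simpa using hi⟩
  · exact ⟨B 0, by
      rw [key 0, Fin.sum_univ_four]
      simp only [h10, h20, h30, lie_self, map_neg, map_smul, map_zero,
        hα0, hα1, hα2, hα3]
      simpa using mul_ne_zero hi ha'⟩
end

section
/- For the 6-dimensional quotient P₆ of the Witt algebra, with basis L₀,...,L₅ and brackets [Lᵢ,Lⱼ] = (j-i)L_{i+j} for i+j ≤ 5 and [Lᵢ,Lⱼ]=0 for i+j > 5, the linear form α dual to L₅ gives a nondegenerate form ω(X,Y)=α([X,Y]); hence P₆ is exact symplectic. -/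
/-- The 6-dimensional quotient `P₆` of the Witt algebra, with basis `L₀,...,L₅`
and brackets `⁅Lᵢ,Lⱼ⁆ = (j-i)L_{i+j}` for `i+j ≤ 5` and `0` otherwise, is exact
symplectic: the linear form dual to `L₅` gives a nondegenerate form
`(X,Y) ↦ α ⁅X,Y⁆`. -/
theorem stmt_15 (V : Type*) [LieRing V] [LieAlgebra ℝ V]
    (B : Module.Basis (Fin 6) ℝ V)
    (hbr : ∀ i j : Fin 6, ⁅B i, B j⁆ =
      if h : (i : ℕ) + (j : ℕ) ≤ 5 then
        ((j : ℝ) - (i : ℝ)) • B ⟨(i : ℕ) + (j : ℕ), by omega⟩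
      else 0)
    (α : V →ₗ[ℝ] ℝ) (hα : ∀ i : Fin 6, α (B i) = if i = 5 then 1 else 0) :
    ∀ X : V, X ≠ 0 → ∃ Y : V, α ⁅X, Y⁆ ≠ 0 := by
  have hb : ∀ k j : Fin 6, α ⁅B k, B j⁆ =
      if (k : ℕ) + (j : ℕ) = 5 then ((j : ℝ) - (k : ℝ)) else 0 := by
    intro k j
    rw [hbr]
    by_cases h : (k : ℕ) + (j : ℕ) ≤ 5
    · rw [dif_pos h, map_smul, hα, smul_eq_mul]
      by_cases h5 : (k : ℕ) + (j : ℕ) = 5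
      · rw [if_pos h5, if_pos (by simp [Fin.ext_iff, h5]), mul_one]
      · rw [if_neg h5, if_neg (by simp [Fin.ext_iff]; omega), mul_zero]
    · rw [dif_neg h, if_neg (by omega), map_zero]
  intro X hX
  obtain ⟨i, hi⟩ : ∃ i, B.repr X i ≠ 0 := by
    by_contra h
    push_neg at h
    exact hX (by simpa using B.repr.injective (Finsupp.ext (by simpa using h)))
  refine ⟨B (5 - i), ?_⟩
  set Y := B (5 - i) with hY
  have key : α ⁅X, Y⁆ = ∑ k : Fin 6, B.repr X k * α ⁅B k, Y⁆ := by
    let g : V →ₗ[ℝ] ℝ :=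
      { toFun := fun x => α ⁅x, Y⁆
        map_add' := fun x y => by simp [add_lie]
        map_smul' := fun c x => by simp [smul_lie] }
    have : α ⁅X, Y⁆ = g X := rfl
    rw [this]
    conv_lhs => rw [← B.sum_repr X]
    rw [map_sum]
    exact Finset.sum_congr rfl fun k _ => by simp [g, smul_eq_mul]
  rw [key]
  fin_cases i <;>
    simp only [hY, Fin.sum_univ_six, hb] at hi ⊢ <;>
    simp (config := { decide := true }) only [if_true, if_false, reduceIte] at hi ⊢ <;>
    norm_num at hi ⊢ <;>
    first | exact hi | exact ⟨hi, by norm_num [Fin.sub_def, show ((3:Fin 6):ℕ) = 3 from rfl,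
      show ((4:Fin 6):ℕ) = 4 from rfl, show ((5:Fin 6):ℕ) = 5 from rfl]⟩
end
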